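/- The Natarajan dimension of the hypothesis class of threshold SyDSs over undirected graphs on n labeled vertices is at least floor(n²/4). -/

import Mathlib

open scoped Classical

/-- Successor function of a threshold SyDS. -/
noncomputable def succF (n : ℕ) (G : SimpleGraph (Fin n)) (τ : Fin n → ℕ)
    (C : Fin n → Bool) : Fin n → Bool :=
  fun v => decide (τ v ≤ (Finset.univ.filter fun u => (u = v ∨ G.Adj v u) ∧ C u = true).card)

/-- The hypothesis class of threshold SyDSs over undirected graphs on n vertices. -/
def ThresholdClass (n : ℕ) : Set ((Fin n → Bool) → (Fin n → Bool)) :=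
  {F | ∃ (G : SimpleGraph (Fin n)) (τ : Fin n → ℕ), ∀ C, F C = succF n G τ C}

/-- R is shattered by H in the Natarajan sense. -/
def NShattered {X : Type*} (H : Set (X → X)) (R : Finset X) : Prop :=
  ∃ g1 g2 : X → X, (∀ C ∈ R, g1 C ≠ g2 C) ∧
    ∀ R' ⊆ R, ∃ F ∈ H, (∀ C ∈ R', F C = g1 C) ∧ ∀ C ∈ R, C ∉ R' → F C = g2 C

/-- Configuration with exactly vertices i and j on. -/
def pairC (n : ℕ) (i j : Fin n) : Fin n → Bool :=
  fun v => decide (v = i ∨ v = j)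

/-- Bipartite graph with edges encoding membership in R'. -/
def sgraph (n : ℕ) (R' : Finset (Fin n → Bool)) : SimpleGraph (Fin n) where
  Adj u w := ((u:ℕ) < n/2 ∧ ¬(w:ℕ) < n/2 ∧ pairC n u w ∈ R') ∨
             ((w:ℕ) < n/2 ∧ ¬(u:ℕ) < n/2 ∧ pairC n w u ∈ R')
  symm := ⟨fun u w h => by tauto⟩
  loopless := ⟨fun u h => by rcases h with ⟨h1,h2,_⟩|⟨h1,h2,_⟩ <;> exact h2 h1⟩

lemma sgraph_adj (n : ℕ) (R' : Finset (Fin n → Bool)) (u w : Fin n) :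
    (sgraph n R').Adj u w ↔ ((u:ℕ) < n/2 ∧ ¬(w:ℕ) < n/2 ∧ pairC n u w ∈ R') ∨
             ((w:ℕ) < n/2 ∧ ¬(u:ℕ) < n/2 ∧ pairC n w u ∈ R') := Iff.rfl

lemma succF_pairC (n : ℕ) (R' : Finset (Fin n → Bool)) (i j : Fin n)
    (hi : (i:ℕ) < n/2) (hj : ¬(j:ℕ) < n/2) :
    succF n (sgraph n R') (fun v => if (v:ℕ) < n/2 then 2 else n+1) (pairC n i j) =
      if pairC n i j ∈ R' then (fun v => decide (v = i)) else (fun _ => false) := by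
  have hij : i ≠ j := fun h => hj (h ▸ hi)
  funext v
  simp only [succF]
  by_cases hv : (v:ℕ) < n/2
  · simp only [hv, if_true]
    by_cases hvi : v = i
    · subst hvi
      by_cases hm : pairC n v j ∈ R'
      · have hS : (Finset.univ.filter fun u =>
            (u = v ∨ (sgraph n R').Adj v u) ∧ pairC n v j u = true) = {v, j} := by
          ext u
          simp only [Finset.mem_filter, Finset.mem_univ, true_and, Finset.mem_insert,
            Finset.mem_singleton, pairC, decide_eq_true_eq]
          constructor
          · rintro ⟨_, h⟩; exact h
          · rintro (rfl | rfl)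
            · exact ⟨Or.inl rfl, Or.inl rfl⟩
            · exact ⟨Or.inr (Or.inl ⟨hi, hj, hm⟩), Or.inr rfl⟩
        rw [hS, if_pos hm]
        rw [Finset.card_insert_of_notMem (by simpa using hij), Finset.card_singleton]
        simp
      · have hS : (Finset.univ.filter fun u =>
            (u = v ∨ (sgraph n R').Adj v u) ∧ pairC n v j u = true) = {v} := by
          ext u
          simp only [Finset.mem_filter, Finset.mem_univ, true_and, Finset.mem_singleton,
            pairC, decide_eq_true_eq]
          constructor
          · rintro ⟨h1, (rfl | rfl)⟩
            · rfl
            · rcases h1 with rfl | h1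
              · rfl
              · rcases h1 with ⟨_, _, h⟩ | ⟨h, _, _⟩
                · exact absurd h hm
                · exact absurd h hj
          · rintro rfl; exact ⟨Or.inl rfl, Or.inl rfl⟩
        rw [hS, if_neg hm, Finset.card_singleton]
        simp
    · have hsub : (Finset.univ.filter fun u =>
          (u = v ∨ (sgraph n R').Adj v u) ∧ pairC n i j u = true) ⊆ {j} := by
        intro u hu
        simp only [Finset.mem_filter, Finset.mem_univ, true_and, pairC,
          decide_eq_true_eq] at hu
        simp only [Finset.mem_singleton]
        rcases hu with ⟨h1, (rfl | rfl)⟩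
        · rcases h1 with rfl | h1
          · exact absurd rfl hvi
          · rcases h1 with ⟨_, h, _⟩ | ⟨_, h, _⟩
            · exact absurd hi h
            · exact absurd hv h
        · rfl
      have hcard := Finset.card_le_card hsub
      rw [Finset.card_singleton] at hcard
      have : ¬ (2 ≤ (Finset.univ.filter fun u =>
          (u = v ∨ (sgraph n R').Adj v u) ∧ pairC n i j u = true).card) := by omega
      rw [decide_eq_false this]
      split
      · simp [hvi]
      · rfl
  · simp only [hv, if_false]
    have hcard : (Finset.univ.filter fun u =>
        (u = v ∨ (sgraph n R').Adj v u) ∧ pairC n i j u = true).card ≤ n := by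
      have := Finset.card_filter_le (Finset.univ : Finset (Fin n))
        (fun u => (u = v ∨ (sgraph n R').Adj v u) ∧ pairC n i j u = true)
      simpa using this
    have : ¬ (n + 1 ≤ (Finset.univ.filter fun u =>
        (u = v ∨ (sgraph n R').Adj v u) ∧ pairC n i j u = true).card) := by omega
    rw [decide_eq_false this]
    have hvi : v ≠ i := fun h => hv (h ▸ hi)
    split
    · simp [hvi]
    · rfl

lemma half_mul (n : ℕ) : n / 2 * (n - n / 2) = n ^ 2 / 4 := by
  rcases Nat.even_or_odd n with ⟨k, hk⟩ | ⟨k, hk⟩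
  · have h2 : n ^ 2 = 4 * (k * k) := by subst hk; ring
    have ha : n / 2 = k := by omega
    have hb : n - n / 2 = k := by omega
    rw [hb, ha, h2, Nat.mul_div_cancel_left _ (by norm_num : (0:ℕ) < 4)]
  · have h2 : n ^ 2 = 4 * (k * (k + 1)) + 1 := by subst hk; ring
    have ha : n / 2 = k := by omega
    have hb : n - n / 2 = k + 1 := by omega
    rw [hb, ha, h2]
    generalize k * (k + 1) = m
    omega

lemma card_A (n : ℕ) :
    (Finset.univ.filter fun v : Fin n => (v:ℕ) < n/2).card = n / 2 := by
  have h : (Finset.univ.filter fun v : Fin n => (v:ℕ) < n/2) =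
      Finset.map (Fin.castLEEmb (Nat.div_le_self n 2)) Finset.univ := by
    ext v
    simp only [Finset.mem_filter, Finset.mem_univ, true_and, Finset.mem_map,
      Fin.castLEEmb_apply]
    constructor
    · intro hv
      exact ⟨⟨(v:ℕ), hv⟩, rfl⟩
    · rintro ⟨u, rfl⟩
      simp
  rw [h, Finset.card_map, Finset.card_univ, Fintype.card_fin]

/-- The Natarajan dimension of the class of threshold SyDSs on n vertices
is at least ⌊n²/4⌋: there is a shattered set of that size. -/
theorem stmt16 (n : ℕ) :
    ∃ R : Finset (Fin n → Bool), R.card = n ^ 2 / 4 ∧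
      NShattered (ThresholdClass n) R := by
  classical
  set A : Finset (Fin n) := Finset.univ.filter fun v : Fin n => (v:ℕ) < n/2 with hA
  set B : Finset (Fin n) := Finset.univ.filter fun v : Fin n => ¬(v:ℕ) < n/2 with hB
  have hmemA : ∀ v : Fin n, v ∈ A ↔ (v:ℕ) < n/2 := by
    intro v; simp [hA]
  have hmemB : ∀ v : Fin n, v ∈ B ↔ ¬(v:ℕ) < n/2 := by
    intro v; simp [hB]
  have hinj : Set.InjOn (fun p : Fin n × Fin n => pairC n p.1 p.2) ↑(A ×ˢ B) := by
    rintro ⟨i, j⟩ hp ⟨i', j'⟩ hq h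
    simp only [Finset.coe_product, Set.mem_prod, Finset.mem_coe] at hp hq
    rw [hmemA] at *
    obtain ⟨hi, hj⟩ := hp
    obtain ⟨hi', hj'⟩ := hq
    rw [hmemB] at hj hj'
    have h1 := congrFun h i
    have h2 := congrFun h j
    simp only [pairC, decide_eq_decide] at h1 h2
    have hii : i = i' := by
      rcases h1.mp (Or.inl (by trivial)) with h' | h'
      · exact h'
      · exact absurd (h' ▸ hi) hj'
    have hjj : j = j' := by
      rcases h2.mp (Or.inr (by trivial)) with h' | h'
      · exact absurd (h' ▸ hi') hj
      · exact h'
    simp [hii, hjj]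
  refine ⟨(A ×ˢ B).image fun p => pairC n p.1 p.2, ?_, ?_⟩
  · rw [Finset.card_image_of_injOn hinj, Finset.card_product]
    have hcB : B.card = n - n / 2 := by
      rw [hB, Finset.filter_not, Finset.card_sdiff_of_subset (Finset.filter_subset _ _)]
      rw [Finset.card_univ, Fintype.card_fin, card_A]
    rw [card_A, hcB, half_mul]
  · refine ⟨fun C v => decide ((v:ℕ) < n/2 ∧ C v = true), fun _ _ => false, ?_, ?_⟩
    · intro C hC
      simp only [Finset.mem_image, Finset.mem_product] at hC
      obtain ⟨⟨i, j⟩, ⟨hiA, hjB⟩, rfl⟩ := hC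
      rw [hmemA] at hiA
      intro h
      have h2 := congrFun h i
      simp only [pairC] at h2
      simp [hiA] at h2
    · intro R' hR'
      refine ⟨succF n (sgraph n R') (fun v => if (v:ℕ) < n/2 then 2 else n+1),
        ⟨sgraph n R', _, fun C => rfl⟩, ?_, ?_⟩
      · intro C hC
        have hCR : C ∈ (A ×ˢ B).image fun p => pairC n p.1 p.2 := hR' hC
        simp only [Finset.mem_image, Finset.mem_product] at hCR
        obtain ⟨⟨i, j⟩, ⟨hiA, hjB⟩, rfl⟩ := hCR
        rw [hmemA] at hiA
        rw [hmemB] at hjB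
        rw [succF_pairC n R' i j hiA hjB, if_pos hC]
        funext v
        by_cases hvi : v = i
        · subst hvi
          simp [pairC, hiA]
        · have h1 : decide (v = i) = false := by simp [hvi]
          have h2 : ¬ ((v:ℕ) < n/2 ∧ pairC n i j v = true) := by
            rintro ⟨hv, hd⟩
            simp only [pairC, decide_eq_true_eq] at hd
            rcases hd with rfl | rfl
            · exact hvi rfl
            · exact hjB hv
          exact h1.trans (decide_eq_false h2).symm
      · intro C hC hC'
        simp only [Finset.mem_image, Finset.mem_product] at hC
        obtain ⟨⟨i, j⟩, ⟨hiA, hjB⟩, rfl⟩ := hC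
        rw [hmemA] at hiA
        rw [hmemB] at hjB
        rw [succF_pairC n R' i j hiA hjB, if_neg hC']
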